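/- Let n ≥ 2. A tuple w = (w_1, …, w_n) ∈ (ℍ^{n−1})ⁿ lies in the image p(𝒟) (that is, there exists U = (q_{ij}) ∈ Sp(n) with q_{nj} ≠ 0 for all j and w_{ij} = q_{ij} q_{nj}^{−1} for all 1 ≤ i ≤ n−1, 1 ≤ j ≤ n) if and only if Σ_{k=1}^{n−1} \overline{w_{ki}} w_{kj} = −1 for all 1 ≤ i < j ≤ n. -/

import Mathlib

open Quaternion Matrix

theorem quat_coe_sum {ι : Type*} (s : Finset ι) (f : ι → ℝ) :
    ((∑ k ∈ s, f k : ℝ) : ℍ[ℝ]) = ∑ k ∈ s, ((f k : ℝ) : ℍ[ℝ]) := by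
  classical
  induction s using Finset.induction with
  | empty => simp
  | insert _ _ h ih => rw [Finset.sum_insert h, Finset.sum_insert h, Quaternion.coe_add, ih]

/-- A tuple `w = (w₁, …, wₙ) ∈ (ℍ^{n-1})ⁿ` lies in the image `p(𝒟)`, i.e. there
is `U ∈ Sp(n)` with all last-row entries nonzero and `w i j = U i j (U (n-1) j)⁻¹`,
if and only if `Σ_{k} conj (w k i) * w k j = -1` for all `i < j`. -/
theorem mem_image_p_iff (n : ℕ) (hn : 2 ≤ n) (w : Fin (n - 1) → Fin n → ℍ[ℝ]) :
    (∃ U : Matrix (Fin n) (Fin n) ℍ[ℝ], Uᴴ * U = 1 ∧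
        (∀ j : Fin n, U ⟨n - 1, by omega⟩ j ≠ 0) ∧
        ∀ (i : Fin (n - 1)) (j : Fin n),
          w i j = U ⟨i.val, lt_of_lt_of_le i.isLt (Nat.sub_le n 1)⟩ j *
            (U ⟨n - 1, by omega⟩ j)⁻¹) ↔
      ∀ i j : Fin n, i < j → ∑ k : Fin (n - 1), star (w k i) * w k j = -1 := by
  obtain ⟨m, rfl⟩ : ∃ m, n = m + 1 := ⟨n - 1, by omega⟩
  constructor
  · rintro ⟨U, hU, hnz, hw⟩ i j hij
    have hw' : ∀ (k : Fin m) (j : Fin (m + 1)),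
        w k j = U k.castSucc j * (U (Fin.last m) j)⁻¹ := fun k j => hw k j
    have hnz' : ∀ j, U (Fin.last m) j ≠ 0 := fun j => hnz j
    have horth : ∑ a : Fin (m + 1), star (U a i) * U a j = 0 := by
      have h1 := congrFun (congrFun hU i) j
      rw [Matrix.mul_apply] at h1
      simp only [Matrix.conjTranspose_apply] at h1
      rw [h1, Matrix.one_apply_ne (ne_of_lt hij)]
    rw [Fin.sum_univ_castSucc] at horth
    set a := U (Fin.last m) i with ha
    set b := U (Fin.last m) j with hb
    have hsum : ∑ k : Fin m, star (U k.castSucc i) * U k.castSucc j = -(star a * b) := by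
      linear_combination (norm := noncomm_ring) horth
    show ∑ k : Fin m, star (w k i) * w k j = -1
    calc ∑ k : Fin m, star (w k i) * w k j
        = ∑ k : Fin m, (star a)⁻¹ * ((star (U k.castSucc i) * U k.castSucc j) * b⁻¹) := by
          refine Finset.sum_congr rfl fun k _ => ?_
          rw [hw' k i, hw' k j, StarMul.star_mul, star_inv₀]
          simp only [mul_assoc]
          rfl
      _ = (star a)⁻¹ * ((∑ k : Fin m, star (U k.castSucc i) * U k.castSucc j) * b⁻¹) := by
          rw [← Finset.mul_sum, ← Finset.sum_mul]
      _ = -1 := by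
          rw [hsum, neg_mul, mul_neg, mul_assoc, mul_inv_cancel₀ (hnz' j), mul_one,
            inv_mul_cancel₀ (star_ne_zero.mpr (hnz' i))]
  · intro hsum
    have hsum' : ∀ i j : Fin (m + 1), i ≠ j →
        ∑ k : Fin m, star (w k i) * w k j = -1 := by
      intro i j hij
      rcases lt_or_gt_of_ne hij with h | h
      · exact hsum i j h
      · have h2 : ∑ k : Fin m, star (w k j) * w k i = -1 := hsum j i h
        calc ∑ k : Fin m, star (w k i) * w k j
            = star (∑ k : Fin m, star (w k j) * w k i) := by
              rw [star_sum]
              exact Finset.sum_congr rfl fun k _ => by rw [StarMul.star_mul, star_star]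
          _ = -1 := by rw [h2, star_neg, star_one]
    set t : Fin (m + 1) → ℝ := fun j => Real.sqrt (1 + ∑ k : Fin m, normSq (w k j)) with ht
    have hpos : ∀ j, (0:ℝ) < 1 + ∑ k : Fin m, normSq (w k j) := by
      intro j
      have : (0:ℝ) ≤ ∑ k : Fin m, normSq (w k j) :=
        Finset.sum_nonneg fun k _ => normSq_nonneg
      linarith
    have htpos : ∀ j, 0 < t j := fun j => Real.sqrt_pos.mpr (hpos j)
    have htsq : ∀ j, t j * t j = 1 + ∑ k : Fin m, normSq (w k j) :=
      fun j => Real.mul_self_sqrt (hpos j).le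
    set U : Matrix (Fin (m + 1)) (Fin (m + 1)) ℍ[ℝ] := Matrix.of fun (a : Fin (m + 1)) (j : Fin (m + 1)) =>
        if h : (a : ℕ) < m then w ⟨a.val, h⟩ j * (((t j)⁻¹ : ℝ) : ℍ[ℝ])
        else (((t j)⁻¹ : ℝ) : ℍ[ℝ]) with hUdef
    have hc : ∀ (k : Fin m) (j : Fin (m + 1)),
        U k.castSucc j = w k j * (((t j)⁻¹ : ℝ) : ℍ[ℝ]) :=
      fun k j => dif_pos k.isLt
    have hl : ∀ (j : Fin (m + 1)), U (Fin.last m) j = (((t j)⁻¹ : ℝ) : ℍ[ℝ]) :=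
      fun j => dif_neg (lt_irrefl m)
    have hlnz : ∀ (j : Fin (m + 1)), U (Fin.last m) j ≠ 0 := by
      intro j
      rw [hl]
      simp only [ne_eq, ← Quaternion.coe_zero, Quaternion.coe_inj]
      exact inv_ne_zero (htpos j).ne'
    have e1 : ∀ h : m + 1 - 1 < m + 1, (⟨m + 1 - 1, h⟩ : Fin (m + 1)) = Fin.last m :=
      fun _ => rfl
    have e2 : ∀ (i : Fin (m + 1 - 1)) (h : (i : ℕ) < m + 1),
        (⟨i.val, h⟩ : Fin (m + 1)) = Fin.castSucc ⟨i.val, i.isLt⟩ := fun _ _ => rfl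
    refine ⟨U, ?_, ?_, ?_⟩
    · refine Matrix.ext fun i j => ?_
      rw [Matrix.mul_apply, Matrix.one_apply, Fin.sum_univ_castSucc]
      simp only [Matrix.conjTranspose_apply, hc, hl]
      have hterm : ∀ k : Fin m,
          star (w k i * (((t i)⁻¹ : ℝ) : ℍ[ℝ])) * (w k j * (((t j)⁻¹ : ℝ) : ℍ[ℝ])) =
            (((t i)⁻¹ * (t j)⁻¹ : ℝ) : ℍ[ℝ]) * (star (w k i) * w k j) := by
        intro k
        simp only [Quaternion.mul_coe_eq_smul, Quaternion.coe_mul_eq_smul, Quaternion.star_smul, smul_mul_smul_comm, smul_smul]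
      simp only [hterm, ← Finset.mul_sum, Quaternion.star_coe, ← Quaternion.coe_mul]
      rcases eq_or_ne i j with rfl | hij
      · rw [if_pos rfl]
        have hss : ∑ k : Fin m, star (w k i) * w k i =
            ((∑ k : Fin m, normSq (w k i) : ℝ) : ℍ[ℝ]) := by
          rw [quat_coe_sum]
          exact Finset.sum_congr rfl fun k _ => Quaternion.star_mul_self (w k i)
        rw [hss, ← Quaternion.coe_mul, ← Quaternion.coe_add, ← Quaternion.coe_one,
          Quaternion.coe_inj]
        have h1 : t i ≠ 0 := (htpos i).ne'
        have h2 := htsq i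
        field_simp
        linarith
      · rw [if_neg hij, hsum' i j hij, mul_neg_one, neg_add_cancel]
    · intro j
      simp only [e1]
      exact hlnz j
    · intro i j
      simp only [e1, e2, hl, hc]
      have hcnz : (((t j)⁻¹ : ℝ) : ℍ[ℝ]) ≠ 0 := by
        simp only [ne_eq, ← Quaternion.coe_zero, Quaternion.coe_inj]
        exact inv_ne_zero (htpos j).ne'
      rw [mul_assoc, mul_inv_cancel₀ hcnz, mul_one]
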